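/- arXiv:2203.04237 — 5 statements merged into one kernel-verified Lean document; each statement's English description precedes it below -/
import Mathlib

section
/- Let $g(u)$ be an invertible skew-symmetric $n\times n$ matrix with entries $g_{ij}(u) = T_{ijk}u^k + g^0_{ij}$ ($T$ totally antisymmetric, $g^0$ antisymmetric), and let $V^i(u) = g^{ij}(u) W_j(u)$ where $W_j(u) = A_{jl}u^l + B_j$ with $A$ constant skew-symmetric and $B$ constant. Then the Jacobian $V^i_{,p} = \partial V^i/\partial u^p$ satisfies $g_{qj}V^j_{,p} + g_{pj}V^j_{,q} = 0$ at every point $u$ where $g(u)$ is invertible. -/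
section Aux

attribute [local instance] Matrix.linftyOpNormedAddCommGroup Matrix.linftyOpNormedRing
  Matrix.linftyOpNormedAlgebra

private noncomputable def projCLM {n : ℕ} (c : Fin n → ℂ) : (Fin n → ℂ) →L[ℂ] ℂ :=
  ∑ k, c k • (ContinuousLinearMap.proj (R := ℂ) (φ := fun _ : Fin n => ℂ) k)

private lemma projCLM_apply {n : ℕ} (c : Fin n → ℂ) (v : Fin n → ℂ) :
    projCLM c v = ∑ k, c k * v k := by
  simp [projCLM, ContinuousLinearMap.sum_apply]

private lemma projCLM_single {n : ℕ} (c : Fin n → ℂ) (p : Fin n) :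
    projCLM c (Pi.single p 1) = c p := by
  simp [projCLM_apply, Pi.single_apply, Finset.sum_ite_eq', mul_ite]

private lemma affine_hasFDerivAt {n : ℕ} (c : Fin n → ℂ) (d : ℂ) (u : Fin n → ℂ) :
    HasFDerivAt (fun v : Fin n → ℂ => (∑ k, c k * v k) + d) (projCLM c) u := by
  have hfun : (fun v : Fin n → ℂ => ∑ k, c k * v k) = ⇑(projCLM c) := by
    funext v; rw [projCLM_apply]
  have h1 : HasFDerivAt (fun v : Fin n → ℂ => ∑ k, c k * v k) (projCLM c) u := by
    rw [hfun]; exact (projCLM c).hasFDerivAt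
  exact h1.add_const d

set_option maxHeartbeats 1000000 in
/-- For `V = g⁻¹ W` with `g` affine skew-symmetric and `W` affine with
skew-symmetric linear part, the first compatibility condition
`g_{qj} V^j_{,p} + g_{pj} V^j_{,q} = 0` holds wherever `g` is invertible. -/
theorem stmt_6 (n : ℕ) (T : Fin n → Fin n → Fin n → ℂ)
    (hT1 : ∀ i j k, T j i k = - T i j k) (hT2 : ∀ i j k, T i k j = - T i j k)
    (g0 : Fin n → Fin n → ℂ) (hg0 : ∀ i j, g0 j i = - g0 i j)
    (A : Fin n → Fin n → ℂ) (hA : ∀ i j, A j i = - A i j) (B : Fin n → ℂ)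
    (g : (Fin n → ℂ) → Matrix (Fin n) (Fin n) ℂ)
    (hg : ∀ u i j, g u i j = (∑ k, T i j k * u k) + g0 i j)
    (W : (Fin n → ℂ) → Fin n → ℂ)
    (hW : ∀ u j, W u j = (∑ l, A j l * u l) + B j)
    (V : (Fin n → ℂ) → Fin n → ℂ)
    (hV : ∀ u, V u = ((g u)⁻¹).mulVec (W u))
    (u : Fin n → ℂ) (hu : IsUnit (g u).det) :
    ∀ q p : Fin n,
      (∑ j, g u q j * fderiv ℂ (fun v => V v j) u (Pi.single p 1)) +
      (∑ j, g u p j * fderiv ℂ (fun v => V v j) u (Pi.single q 1)) = 0 := by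
  -- g is differentiable (affine)
  have hGL : ∃ L : (Fin n → ℂ) →ₗ[ℂ] Matrix (Fin n) (Fin n) ℂ,
      ∀ v i j, L v i j = ∑ k, T i j k * v k := by
    refine ⟨{ toFun := fun v => Matrix.of fun i j => ∑ k, T i j k * v k,
              map_add' := ?_, map_smul' := ?_ }, fun v i j => rfl⟩
    · intro x y; ext i j
      simp [mul_add, Finset.sum_add_distrib]
    · intro c x; ext i j
      simp [Finset.mul_sum]; ring_nf
      exact Finset.sum_congr rfl fun k _ => by ring
  obtain ⟨L, hL⟩ := hGL
  have hgfun : g = fun v => L.toContinuousLinearMap v + Matrix.of g0 := by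
    funext v; ext i j
    simp [hg, hL, LinearMap.coe_toContinuousLinearMap']
  have hgdiff : DifferentiableAt ℂ g u := by
    rw [hgfun]
    exact (L.toContinuousLinearMap.hasFDerivAt.add_const _).differentiableAt
  -- the inverse is differentiable at u
  have hunit : IsUnit (g u) := (Matrix.isUnit_iff_isUnit_det _).2 hu
  have hinv : DifferentiableAt ℂ (fun v => Ring.inverse (g v)) u :=
    (differentiableAt_inverse hunit).comp u hgdiff
  -- each component of V is differentiable at u
  have hVdiff : ∀ j, DifferentiableAt ℂ (fun v => V v j) u := by
    intro j
    have hVexp : (fun v => V v j)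
        = fun v => ∑ i, (Ring.inverse (g v)) j i * W v i := by
      funext v
      rw [hV, Matrix.nonsing_inv_eq_ringInverse]
      simp [Matrix.mulVec, dotProduct]
    rw [hVexp]
    refine DifferentiableAt.fun_sum fun i _ => DifferentiableAt.mul ?_ ?_
    · exact ((Matrix.entryLinearMap ℂ ℂ j i).toContinuousLinearMap.differentiableAt).comp u hinv
    · have := (affine_hasFDerivAt (A i) (B i) u).differentiableAt
      have heq : (fun v => W v i) = fun v : Fin n → ℂ => (∑ l, A i l * v l) + B i := by
        funext v; rw [hW]
      rw [heq]; exact this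
  -- det is eventually nonzero
  have hgcont : Continuous g := by
    refine continuous_matrix fun i j => ?_
    have heq : (fun v => g v i j) = fun v : Fin n → ℂ => (∑ k, T i j k * v k) + g0 i j :=
      funext fun v => hg v i j
    rw [heq]
    exact (continuous_finset_sum _ fun k _ =>
      (continuous_const.mul (continuous_apply k))).add continuous_const
  have hdetne : ∀ᶠ v in nhds u, (g v).det ≠ 0 := by
    have hc : ContinuousAt (fun v => (g v).det) u :=
      (hgcont.matrix_det).continuousAt
    exact hc.eventually_ne (IsUnit.ne_zero (by simpa using hu))
  -- the key eventual identity
  have hId : ∀ q : Fin n, ∀ᶠ v in nhds u, (∑ j, g v q j * V v j) = W v q := by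
    intro q
    filter_upwards [hdetne] with v hv
    have hvunit : IsUnit (g v).det := isUnit_iff_ne_zero.2 hv
    have h1 : (g v).mulVec (V v) = W v := by
      rw [hV, Matrix.mulVec_mulVec, Matrix.mul_nonsing_inv _ hvunit, Matrix.one_mulVec]
    calc (∑ j, g v q j * V v j) = (g v).mulVec (V v) q := by
          simp [Matrix.mulVec, dotProduct]
      _ = W v q := by rw [h1]
  -- key derivative identity
  have key : ∀ q p : Fin n,
      (∑ j, g u q j * fderiv ℂ (fun v => V v j) u (Pi.single p 1))
        = A q p - ∑ j, V u j * T q j p := by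
    intro q p
    have hgqj : ∀ j, HasFDerivAt (fun v => g v q j) (projCLM (fun k => T q j k)) u := by
      intro j
      have heq : (fun v => g v q j)
          = fun v : Fin n → ℂ => (∑ k, T q j k * v k) + g0 q j := by
        funext v; rw [hg]
      rw [heq]; exact affine_hasFDerivAt _ _ u
    have hWq : HasFDerivAt (fun v => W v q) (projCLM (fun l => A q l)) u := by
      have heq : (fun v => W v q)
          = fun v : Fin n → ℂ => (∑ l, A q l * v l) + B q := by
        funext v; rw [hW]
      rw [heq]; exact affine_hasFDerivAt _ _ u
    have hsum : HasFDerivAt (fun v => ∑ j, g v q j * V v j)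
        (∑ j, (g u q j • fderiv ℂ (fun v => V v j) u
              + V u j • projCLM (fun k => T q j k))) u := by
      refine HasFDerivAt.fun_sum fun j _ => ?_
      exact (hgqj j).mul ((hVdiff j).hasFDerivAt)
    have hfd : fderiv ℂ (fun v => ∑ j, g v q j * V v j) u
        = fderiv ℂ (fun v => W v q) u := Filter.EventuallyEq.fderiv_eq (hId q)
    have h2 : (∑ j, (g u q j • fderiv ℂ (fun v => V v j) u
              + V u j • projCLM (fun k => T q j k)))
        = projCLM (fun l => A q l) := by
      rw [← hsum.fderiv, hfd, hWq.fderiv]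
    have h3 := congrArg (fun (Φ : (Fin n → ℂ) →L[ℂ] ℂ) => Φ (Pi.single p 1)) h2
    simp only [ContinuousLinearMap.sum_apply, ContinuousLinearMap.add_apply,
      ContinuousLinearMap.smul_apply, smul_eq_mul, projCLM_single] at h3
    rw [Finset.sum_add_distrib] at h3
    linear_combination h3
  intro q p
  have hTsw : ∀ j, T p j q = - T q j p := by
    intro j
    linear_combination hT2 p q j - hT1 q p j + hT2 q p j
  rw [key q p, key p q, hA q p]
  have hsw : (∑ j, V u j * T p j q) = - ∑ j, V u j * T q j p := by
    rw [← Finset.sum_neg_distrib]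
    exact Finset.sum_congr rfl fun j _ => by rw [hTsw j]; ring
  rw [hsw]; ring

end Aux
end

section
/- With $g$, $W$, $V$ as above ($g_{ij} = T_{ijk}u^k + g^0_{ij}$ invertible skew-symmetric with $T$ totally antisymmetric, $W_j = A_{jl}u^l + B_j$ with $A$ skew-symmetric, $V^i = g^{ij}W_j$), the second compatibility condition $g_{qk}V^k_{,pl} + g_{pq,k}V^k_{,l} + g_{qk,l}V^k_{,p} = 0$ holds identically, where $g_{pq,k} = T_{pqk}$ and $V^k_{,pl}$ denotes second partial derivatives. -/
theorem aux_det_contDiff {n : ℕ} (M : (Fin n → ℂ) → Matrix (Fin n) (Fin n) ℂ)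
    (h : ∀ i j, ContDiff ℂ ⊤ fun v => M v i j) :
    ContDiff ℂ ⊤ fun v => (M v).det := by
  have : (fun v => (M v).det)
      = fun v => ∑ σ : Equiv.Perm (Fin n),
          ((Equiv.Perm.sign σ : ℤ) : ℂ) * ∏ i, M v (σ i) i := by
    funext v
    rw [Matrix.det_apply]
    simp [Units.smul_def, zsmul_eq_mul]
  rw [this]
  exact ContDiff.sum fun σ _ =>
    (contDiff_const.mul (contDiff_prod fun i _ => h (σ i) i))

/-- For `V = g⁻¹ W` with `g` affine skew-symmetric and `W` affine with
skew-symmetric linear part, the second compatibility condition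
`g_{qk} V^k_{,pl} + g_{pq,k} V^k_{,l} + g_{qk,l} V^k_{,p} = 0` holds
(here `g_{pq,k} = T_{pqk}`). -/
theorem stmt_7 (n : ℕ) (T : Fin n → Fin n → Fin n → ℂ)
    (hT1 : ∀ i j k, T j i k = - T i j k) (hT2 : ∀ i j k, T i k j = - T i j k)
    (g0 : Fin n → Fin n → ℂ) (hg0 : ∀ i j, g0 j i = - g0 i j)
    (A : Fin n → Fin n → ℂ) (hA : ∀ i j, A j i = - A i j) (B : Fin n → ℂ)
    (g : (Fin n → ℂ) → Matrix (Fin n) (Fin n) ℂ)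
    (hg : ∀ u i j, g u i j = (∑ k, T i j k * u k) + g0 i j)
    (W : (Fin n → ℂ) → Fin n → ℂ)
    (hW : ∀ u j, W u j = (∑ l, A j l * u l) + B j)
    (V : (Fin n → ℂ) → Fin n → ℂ)
    (hV : ∀ u, V u = ((g u)⁻¹).mulVec (W u))
    (u : Fin n → ℂ) (hu : IsUnit (g u).det) :
    ∀ q p l : Fin n,
      (∑ k, g u q k *
        fderiv ℂ (fun v => fderiv ℂ (fun w => V w k) v (Pi.single p 1)) u
          (Pi.single l 1)) +
      (∑ k, T p q k * fderiv ℂ (fun v => V v k) u (Pi.single l 1)) +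
      (∑ k, T q k l * fderiv ℂ (fun v => V v k) u (Pi.single p 1)) = 0 := by
  classical
  intro q p l
  have hu0 : (g u).det ≠ 0 := hu.ne_zero
  -- linear maps
  set L : Fin n → Fin n → (Fin n → ℂ) →L[ℂ] ℂ :=
    fun i j => ∑ k, T i j k • (ContinuousLinearMap.proj k) with hL
  set MW : Fin n → (Fin n → ℂ) →L[ℂ] ℂ :=
    fun j => ∑ k, A j k • (ContinuousLinearMap.proj k) with hMW
  have hgfun : ∀ i j, (fun v => g v i j) = fun v => L i j v + g0 i j := by
    intro i j; funext v
    simp [hg, hL, ContinuousLinearMap.sum_apply, smul_eq_mul]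
  have hWfun : ∀ j, (fun v => W v j) = fun v => MW j v + B j := by
    intro j; funext v
    simp [hW, hMW, ContinuousLinearMap.sum_apply, smul_eq_mul]
  have hLval : ∀ i j m, L i j (Pi.single m 1) = T i j m := by
    intro i j m
    simp [hL, ContinuousLinearMap.sum_apply, smul_eq_mul, Pi.single_apply]
  have hMWval : ∀ j m, MW j (Pi.single m 1) = A j m := by
    intro j m
    simp [hMW, ContinuousLinearMap.sum_apply, smul_eq_mul, Pi.single_apply]
  have hgL : ∀ i j v, HasFDerivAt (fun v => g v i j) (L i j) v := by
    intro i j v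
    rw [hgfun]
    exact (L i j).hasFDerivAt.add_const _
  have hWL : ∀ j v, HasFDerivAt (fun v => W v j) (MW j) v := by
    intro j v
    rw [hWfun]
    exact (MW j).hasFDerivAt.add_const _
  have hgc : ∀ i j, ContDiff ℂ ⊤ fun v => g v i j := by
    intro i j; rw [hgfun]; exact (L i j).contDiff.add contDiff_const
  have hWc : ∀ j, ContDiff ℂ ⊤ fun v => W v j := by
    intro j; rw [hWfun]; exact (MW j).contDiff.add contDiff_const
  have hdet : ContDiff ℂ ⊤ fun v => (g v).det := aux_det_contDiff g hgc
  have hadj : ∀ k j, ContDiff ℂ ⊤ fun v => (g v).adjugate k j := by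
    intro k j
    have : (fun v => (g v).adjugate k j)
        = fun v => ((g v).updateRow j (Pi.single k 1)).det := by
      funext v; rw [Matrix.adjugate_apply]
    rw [this]
    refine aux_det_contDiff _ fun i' j' => ?_
    by_cases h : i' = j
    · subst h; simp only [Matrix.updateRow_self]; exact contDiff_const
    · simp only [Matrix.updateRow_ne h]; exact hgc i' j'
  have hVexp : ∀ v k, V v k = ((g v).det)⁻¹ * ∑ j, (g v).adjugate k j * W v j := by
    intro v k
    rw [hV, Matrix.inv_def]
    simp [Matrix.smul_mulVec, Matrix.mulVec, dotProduct,
      Ring.inverse_eq_inv', smul_eq_mul, Finset.mul_sum, mul_assoc]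
  have hUopen : IsOpen {v : Fin n → ℂ | (g v).det ≠ 0} :=
    isOpen_ne.preimage (hdet.continuous)
  have hVc : ∀ (k : Fin n) (v : Fin n → ℂ), (g v).det ≠ 0 →
      ContDiffAt ℂ ⊤ (fun w => V w k) v := by
    intro k v hv
    have : (fun w => V w k)
        = fun w => ((g w).det)⁻¹ * ∑ j, (g w).adjugate k j * W w j := by
      funext w; exact hVexp w k
    rw [this]
    exact (hdet.contDiffAt.inv hv).mul
      (ContDiff.sum fun j _ => (hadj k j).mul (hWc j)).contDiffAt
  have hVd : ∀ (k : Fin n) (v : Fin n → ℂ), (g v).det ≠ 0 →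
      DifferentiableAt ℂ (fun w => V w k) v :=
    fun k v hv => (hVc k v hv).differentiableAt (by simp)
  have hId : ∀ (v : Fin n → ℂ), (g v).det ≠ 0 → ∀ r, ∑ k, g v r k * V v k = W v r := by
    intro v hv r
    have h1 : (g v).mulVec (V v) = W v := by
      rw [hV, Matrix.mulVec_mulVec, Matrix.mul_nonsing_inv _ (isUnit_iff_ne_zero.2 hv),
        Matrix.one_mulVec]
    calc ∑ k, g v r k * V v k = (g v).mulVec (V v) r := by
          simp [Matrix.mulVec, dotProduct]
      _ = W v r := by rw [h1]
  have hRel1 : ∀ (v : Fin n → ℂ), (g v).det ≠ 0 → ∀ r m,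
      ∑ k, (g v r k * fderiv ℂ (fun w => V w k) v (Pi.single m 1)
        + V v k * T r k m) = A r m := by
    intro v hv r m
    have hs : HasFDerivAt (fun w => ∑ k, g w r k * V w k)
        (∑ k, (g v r k • fderiv ℂ (fun w => V w k) v + V v k • L r k)) v :=
      HasFDerivAt.fun_sum fun k _ => (hgL r k v).mul ((hVd k v hv).hasFDerivAt)
    have heq : (fun w => ∑ k, g w r k * V w k) =ᶠ[nhds v] fun w => W w r := by
      filter_upwards [hUopen.mem_nhds hv] with w hw
      exact hId w hw r
    have hs' : HasFDerivAt (fun w => W w r)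
        (∑ k, (g v r k • fderiv ℂ (fun w => V w k) v + V v k • L r k)) v :=
      hs.congr_of_eventuallyEq heq.symm
    have hder := hs'.unique (hWL r v)
    have h2 := congrArg (fun (f : (Fin n → ℂ) →L[ℂ] ℂ) => f (Pi.single m 1)) hder
    simpa only [ContinuousLinearMap.sum_apply, ContinuousLinearMap.add_apply,
      ContinuousLinearMap.smul_apply, smul_eq_mul, hLval, hMWval] using h2
  -- second derivative stage
  have hFd : ∀ k : Fin n, DifferentiableAt ℂ
      (fun v => fderiv ℂ (fun w => V w k) v (Pi.single p 1)) u := by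
    intro k
    have h2 : ContDiffAt ℂ 1 (fderiv ℂ (fun w => V w k)) u :=
      (hVc k u hu0).fderiv_right le_top
    exact (h2.differentiableAt one_ne_zero).clm_apply (differentiableAt_const _)
  have hs2 : HasFDerivAt
      (fun v => ∑ k, (g v q k * fderiv ℂ (fun w => V w k) v (Pi.single p 1)
        + V v k * T q k p))
      (∑ k, ((g u q k •
          fderiv ℂ (fun v => fderiv ℂ (fun w => V w k) v (Pi.single p 1)) u
        + fderiv ℂ (fun w => V w k) u (Pi.single p 1) • L q k)
        + T q k p • fderiv ℂ (fun w => V w k) u)) u :=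
    HasFDerivAt.fun_sum fun k _ =>
      ((hgL q k u).mul (hFd k).hasFDerivAt).add
        (((hVd k u hu0).hasFDerivAt).mul_const (T q k p))
  have heq2 : (fun v => ∑ k, (g v q k * fderiv ℂ (fun w => V w k) v (Pi.single p 1)
      + V v k * T q k p)) =ᶠ[nhds u] fun _ => A q p := by
    filter_upwards [hUopen.mem_nhds hu0] with w hw
    exact hRel1 w hw q p
  have hs2' := hs2.congr_of_eventuallyEq heq2.symm
  have hder2 := hs2'.unique (hasFDerivAt_const _ _)
  have h3 := congrArg (fun (f : (Fin n → ℂ) →L[ℂ] ℂ) => f (Pi.single l 1)) hder2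
  simp only [ContinuousLinearMap.sum_apply, ContinuousLinearMap.add_apply,
    ContinuousLinearMap.smul_apply, ContinuousLinearMap.zero_apply, smul_eq_mul,
    hLval] at h3
  rw [Finset.sum_add_distrib, Finset.sum_add_distrib] at h3
  have hTs : ∀ k, T p q k = T q k p := by
    intro k
    rw [hT1 q p k, hT2 q p k]
  simp_rw [hTs]
  have e2 : ∑ k, T q k p * fderiv ℂ (fun v => V v k) u (Pi.single l 1)
      = ∑ k, T q k p * fderiv ℂ (fun w => V w k) u (Pi.single l 1) := rfl
  have e3 : ∑ k, T q k l * fderiv ℂ (fun v => V v k) u (Pi.single p 1)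
      = ∑ k, fderiv ℂ (fun w => V w k) u (Pi.single p 1) * T q k l :=
    Finset.sum_congr rfl fun k _ => mul_comm _ _
  rw [e3]
  linear_combination h3
end

section
/- Conversely, if $g_{ij}(u) = T_{ijk}u^k + g^0_{ij}$ is invertible skew-symmetric ($T$ totally antisymmetric, $g^0$ antisymmetric) and a smooth vector field $V^i(u)$ satisfies both $g_{qj}V^j_{,p} + g_{pj}V^j_{,q} = 0$ and $g_{qk}V^k_{,pl} + g_{pq,k}V^k_{,l} + g_{qk,l}V^k_{,p} = 0$ on a connected open set, then $W_j := g_{jk}V^k$ has the form $W_j = A_{jl}u^l + B_j$ with $A$ constant skew-symmetric and $B$ constant. -/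
lemma clm_pi_ext {n : ℕ} {F : Type*} [NormedAddCommGroup F] [NormedSpace ℂ F]
    {L M : (Fin n → ℂ) →L[ℂ] F}
    (h : ∀ b, L (Pi.single b 1) = M (Pi.single b 1)) : L = M := by
  apply ContinuousLinearMap.coe_injective
  exact Module.Basis.ext (Pi.basisFun ℂ (Fin n)) (by simpa using h)

lemma const_of_zero_fderiv {E F : Type*} [NormedAddCommGroup E] [NormedSpace ℂ E]
    [NormedSpace ℝ E] [NormedAddCommGroup F] [NormedSpace ℂ F]
    {f : E → F} {s : Set E} (hs : IsOpen s) (hconn : IsPreconnected s)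
    (hf : ∀ x ∈ s, HasFDerivAt f (0 : E →L[ℂ] F) x) {x y : E} (hx : x ∈ s) (hy : y ∈ s) :
    f x = f y := by
  have key : ∀ z ∈ s, ∃ ε > 0, Metric.ball z ε ⊆ s ∧ ∀ w ∈ Metric.ball z ε, f w = f z := by
    intro z hz
    obtain ⟨ε, hε, hball⟩ := Metric.isOpen_iff.1 hs z hz
    refine ⟨ε, hε, hball, fun w hw => ?_⟩
    refine (convex_ball z ε).is_const_of_fderivWithin_eq_zero
      (fun v hv => ((hf v (hball hv)).differentiableAt).differentiableWithinAt)
      (fun v hv => ?_) hw (Metric.mem_ball_self hε)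
    rw [fderivWithin_of_isOpen Metric.isOpen_ball hv]
    exact (hf v (hball hv)).fderiv
  set t : Set E := {z | z ∈ s ∧ f z = f x} with ht
  set v : Set E := {z | z ∈ s ∧ f z ≠ f x} with hv
  have hto : IsOpen t := by
    rw [Metric.isOpen_iff]
    intro z hz
    obtain ⟨ε, hε, hball, hc⟩ := key z hz.1
    exact ⟨ε, hε, fun w hw => ⟨hball hw, (hc w hw).trans hz.2⟩⟩
  have hvo : IsOpen v := by
    rw [Metric.isOpen_iff]
    intro z hz
    obtain ⟨ε, hε, hball, hc⟩ := key z hz.1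
    exact ⟨ε, hε, fun w hw => ⟨hball hw, (hc w hw).symm ▸ hz.2⟩⟩
  by_contra hne
  have := hconn t v hto hvo (fun z hz => by
      by_cases h : f z = f x
      · exact Or.inl ⟨hz, h⟩
      · exact Or.inr ⟨hz, h⟩)
    ⟨x, hx, hx, rfl⟩ ⟨y, hy, hy, fun h => hne h.symm⟩
  obtain ⟨z, _, hzt, hzv⟩ := this
  exact hzv.2 hzt.2

lemma sum_smul_proj_single {n : ℕ} (c : Fin n → ℂ) (b : Fin n) :
    (∑ m, c m • (ContinuousLinearMap.proj m : (Fin n → ℂ) →L[ℂ] ℂ)) (Pi.single b 1) = c b := by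
  simp [ContinuousLinearMap.sum_apply, Pi.single_apply]

/-- Conversely, if a smooth vector field `V` satisfies both compatibility
conditions with respect to an affine invertible skew-symmetric `g` on a connected
open set, then `W_j = g_{jk} V^k` is affine with constant skew-symmetric linear part. -/
theorem stmt_8 (n : ℕ) (T : Fin n → Fin n → Fin n → ℂ)
    (hT1 : ∀ i j k, T j i k = - T i j k) (hT2 : ∀ i j k, T i k j = - T i j k)
    (g0 : Fin n → Fin n → ℂ) (hg0 : ∀ i j, g0 j i = - g0 i j)
    (g : (Fin n → ℂ) → Matrix (Fin n) (Fin n) ℂ)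
    (hg : ∀ u i j, g u i j = (∑ k, T i j k * u k) + g0 i j)
    (s : Set (Fin n → ℂ)) (hs : IsOpen s) (hconn : IsConnected s)
    (hinv : ∀ u ∈ s, IsUnit (g u).det)
    (V : (Fin n → ℂ) → Fin n → ℂ) (hV : ContDiffOn ℂ ⊤ V s)
    (hc1 : ∀ u ∈ s, ∀ q p : Fin n,
      (∑ j, g u q j * fderiv ℂ (fun v => V v j) u (Pi.single p 1)) +
      (∑ j, g u p j * fderiv ℂ (fun v => V v j) u (Pi.single q 1)) = 0)
    (hc2 : ∀ u ∈ s, ∀ q p l : Fin n,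
      (∑ k, g u q k *
        fderiv ℂ (fun v => fderiv ℂ (fun w => V w k) v (Pi.single p 1)) u
          (Pi.single l 1)) +
      (∑ k, T p q k * fderiv ℂ (fun v => V v k) u (Pi.single l 1)) +
      (∑ k, T q k l * fderiv ℂ (fun v => V v k) u (Pi.single p 1)) = 0) :
    ∃ (A : Fin n → Fin n → ℂ) (B : Fin n → ℂ),
      (∀ i j, A j i = - A i j) ∧
      ∀ u ∈ s, ∀ j, (∑ k, g u j k * V u k) = (∑ l, A j l * u l) + B j := by
  classical
  obtain ⟨u0, hu0⟩ := hconn.nonempty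
  -- derivative of the entries of g
  have hgd : ∀ (j k : Fin n) (u : Fin n → ℂ), HasFDerivAt (fun u => g u j k)
      (∑ m, T j k m • (ContinuousLinearMap.proj m : (Fin n → ℂ) →L[ℂ] ℂ)) u := by
    intro j k u
    have h : (fun u : Fin n → ℂ => g u j k) = fun u => (∑ m, T j k m * u m) + g0 j k := by
      funext u; exact hg u j k
    rw [h]
    exact (HasFDerivAt.fun_sum fun m _ =>
      ((ContinuousLinearMap.proj m : (Fin n → ℂ) →L[ℂ] ℂ).hasFDerivAt).const_mul
        (T j k m)).add_const _
  -- smoothness of components of V and their derivatives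
  have hVk : ∀ k : Fin n, ContDiffOn ℂ ⊤ (fun v => V v k) s := fun k =>
    (ContinuousLinearMap.proj k : (Fin n → ℂ) →L[ℂ] ℂ).contDiff.comp_contDiffOn hV
  have hVkd : ∀ (k : Fin n) (u), u ∈ s → DifferentiableAt ℂ (fun v => V v k) u := fun k u hu =>
    ((hVk k).differentiableOn (by simp)).differentiableAt (hs.mem_nhds hu)
  have hDfC : ∀ k : Fin n, ContDiffOn ℂ ⊤ (fun u => fderiv ℂ (fun v => V v k) u) s := fun k =>
    (hVk k).fderiv_of_isOpen hs le_top
  have hFd : ∀ (k a : Fin n) (u), u ∈ s → DifferentiableAt ℂ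
      (fun v => fderiv ℂ (fun w => V w k) v (Pi.single a 1)) u := fun k a u hu =>
    ((((ContinuousLinearMap.apply ℂ ℂ (Pi.single a 1 : Fin n → ℂ)).contDiff).comp_contDiffOn
      (hDfC k)).differentiableOn (by simp)).differentiableAt (hs.mem_nhds hu)
  -- derivative of W_j
  have hW : ∀ (j : Fin n) (u), u ∈ s → HasFDerivAt (fun u => ∑ k, g u j k * V u k)
      (∑ k, (g u j k • fderiv ℂ (fun v => V v k) u +
        V u k • ∑ m, T j k m • (ContinuousLinearMap.proj m : (Fin n → ℂ) →L[ℂ] ℂ))) u :=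
    fun j u hu => HasFDerivAt.fun_sum fun k _ => (hgd j k u).mul ((hVkd k u hu).hasFDerivAt)
  -- derivative of P j a
  have hPd : ∀ (j a : Fin n) (u), u ∈ s → HasFDerivAt
      (fun u => (∑ k, g u j k * fderiv ℂ (fun v => V v k) u (Pi.single a 1)) +
        ∑ k, T j k a * V u k)
      ((∑ k, (g u j k • fderiv ℂ
          (fun v => fderiv ℂ (fun w => V w k) v (Pi.single a 1)) u +
        fderiv ℂ (fun v => V v k) u (Pi.single a 1) •
          ∑ m, T j k m • (ContinuousLinearMap.proj m : (Fin n → ℂ) →L[ℂ] ℂ))) +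
        ∑ k, T j k a • fderiv ℂ (fun v => V v k) u) u := fun j a u hu =>
    (HasFDerivAt.fun_sum fun k _ => (hgd j k u).mul ((hFd k a u hu).hasFDerivAt)).add
      (HasFDerivAt.fun_sum fun k _ => ((hVkd k u hu).hasFDerivAt).const_mul (T j k a))
  have hT' : ∀ a j k, T a j k = T j k a := fun a j k => by rw [hT1 j a k, hT2 j a k]
  -- second derivative vanishes: P j a has zero derivative on s
  have hP0 : ∀ (j a : Fin n) (u), u ∈ s → HasFDerivAt
      (fun u => (∑ k, g u j k * fderiv ℂ (fun v => V v k) u (Pi.single a 1)) +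
        ∑ k, T j k a * V u k) (0 : (Fin n → ℂ) →L[ℂ] ℂ) u := by
    intro j a u hu
    have h := hPd j a u hu
    have hz : ((∑ k, (g u j k • fderiv ℂ
          (fun v => fderiv ℂ (fun w => V w k) v (Pi.single a 1)) u +
        fderiv ℂ (fun v => V v k) u (Pi.single a 1) •
          ∑ m, T j k m • (ContinuousLinearMap.proj m : (Fin n → ℂ) →L[ℂ] ℂ))) +
        ∑ k, T j k a • fderiv ℂ (fun v => V v k) u) = 0 := by
      apply clm_pi_ext
      intro b
      have h2 := hc2 u hu j a b
      have h3 : (∑ k, T a j k * fderiv ℂ (fun v => V v k) u (Pi.single b 1)) =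
          ∑ k, T j k a * fderiv ℂ (fun v => V v k) u (Pi.single b 1) :=
        Finset.sum_congr rfl fun k _ => by rw [hT']
      rw [h3] at h2
      have ecomm : (∑ k, fderiv ℂ (fun v => V v k) u (Pi.single a 1) * T j k b) =
          ∑ k, T j k b * fderiv ℂ (fun v => V v k) u (Pi.single a 1) :=
        Finset.sum_congr rfl fun k _ => mul_comm _ _
      simp only [ContinuousLinearMap.add_apply, ContinuousLinearMap.sum_apply,
        ContinuousLinearMap.smul_apply, smul_eq_mul, ContinuousLinearMap.zero_apply,
        ContinuousLinearMap.proj_apply, Pi.single_apply, mul_ite, mul_one, mul_zero,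
        Finset.sum_ite_eq, Finset.sum_ite_eq', Finset.mem_univ, if_true,
        Finset.sum_add_distrib]
      linear_combination h2 + ecomm
    rwa [hz] at h
  -- P j a is constant on s
  have hPc : ∀ (j a : Fin n) (u), u ∈ s →
      ((∑ k, g u j k * fderiv ℂ (fun v => V v k) u (Pi.single a 1)) + ∑ k, T j k a * V u k) =
      ((∑ k, g u0 j k * fderiv ℂ (fun v => V v k) u0 (Pi.single a 1)) +
        ∑ k, T j k a * V u0 k) := fun j a u hu =>
    const_of_zero_fderiv hs hconn.isPreconnected (hP0 j a) hu hu0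
  refine ⟨fun j a => (∑ k, g u0 j k * fderiv ℂ (fun v => V v k) u0 (Pi.single a 1)) +
      ∑ k, T j k a * V u0 k,
    fun j => (∑ k, g u0 j k * V u0 k) -
      ∑ l, ((∑ k, g u0 j k * fderiv ℂ (fun v => V v k) u0 (Pi.single l 1)) +
        ∑ k, T j k l * V u0 k) * u0 l, ?_, ?_⟩
  · -- skew-symmetry
    intro i j
    have h1 := hc1 u0 hu0 j i
    have hTk : ∀ k, T i k j = -T j k i := fun k => by
      rw [hT2 i j k, ← hT1 i j k]; exact hT2 j k i
    have e1 : (∑ k, T i k j * V u0 k) = -∑ k, T j k i * V u0 k := by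
      rw [← Finset.sum_neg_distrib]
      exact Finset.sum_congr rfl fun k _ => by rw [hTk k]; ring
    linear_combination h1 + e1
  · -- affineness
    intro u hu j
    -- H j has zero derivative on s
    have hH : ∀ w ∈ s, HasFDerivAt (fun u => (∑ k, g u j k * V u k) -
        ∑ l, ((∑ k, g u0 j k * fderiv ℂ (fun v => V v k) u0 (Pi.single l 1)) +
          ∑ k, T j k l * V u0 k) * u l) (0 : (Fin n → ℂ) →L[ℂ] ℂ) w := by
      intro w hw
      have h1 := (hW j w hw).sub (HasFDerivAt.fun_sum (u := Finset.univ) fun l _ =>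
        ((ContinuousLinearMap.proj l : (Fin n → ℂ) →L[ℂ] ℂ).hasFDerivAt).const_mul
          ((∑ k, g u0 j k * fderiv ℂ (fun v => V v k) u0 (Pi.single l 1)) +
            ∑ k, T j k l * V u0 k))
      have hz : ((∑ k, (g w j k • fderiv ℂ (fun v => V v k) w +
          V w k • ∑ m, T j k m • (ContinuousLinearMap.proj m : (Fin n → ℂ) →L[ℂ] ℂ))) -
          ∑ l, ((∑ k, g u0 j k * fderiv ℂ (fun v => V v k) u0 (Pi.single l 1)) +
            ∑ k, T j k l * V u0 k) • (ContinuousLinearMap.proj l : (Fin n → ℂ) →L[ℂ] ℂ)) = 0 := by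
        apply clm_pi_ext
        intro b
        have hp := hPc j b w hw
        have ecomm : (∑ k, V w k * T j k b) = ∑ k, T j k b * V w k :=
          Finset.sum_congr rfl fun k _ => mul_comm _ _
        simp only [ContinuousLinearMap.sub_apply, ContinuousLinearMap.sum_apply,
          ContinuousLinearMap.add_apply, ContinuousLinearMap.smul_apply, smul_eq_mul,
          ContinuousLinearMap.zero_apply, ContinuousLinearMap.proj_apply, Pi.single_apply,
          mul_ite, mul_one, mul_zero, Finset.sum_ite_eq, Finset.sum_ite_eq', Finset.mem_univ,
          if_true, Finset.sum_add_distrib]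
        linear_combination hp + ecomm
      rwa [hz] at h1
    have hc := const_of_zero_fderiv hs hconn.isPreconnected hH hu hu0
    linear_combination hc
end

section
/- Let $g$ be an invertible skew-symmetric $n \times n$ complex matrix and $M$ any $n \times n$ matrix such that $gM$ is skew-symmetric. Then every eigenvalue of $M$ has even algebraic multiplicity; equivalently, the characteristic polynomial of $M$ is a perfect square in $\mathbb{C}[\lambda]$. -/
open Matrix

private lemma skew_det_sq {F : Type*} [Field F] (h2 : (2:F) ≠ 0) :
    ∀ n (A : Matrix (Fin n) (Fin n) F), Aᵀ = -A → ∃ c : F, A.det = c ^ 2 := by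
  intro n
  induction n using Nat.strong_induction_on with
  | _ n ih =>
    intro A hA
    by_cases hd : A.det = 0
    · exact ⟨0, by simp [hd]⟩
    have hskew : ∀ i j, A j i = -A i j := fun i j => by
      have := congrFun (congrFun hA i) j
      simpa using this
    have hdiag : ∀ i, A i i = 0 := fun i => by
      have h := hskew i i
      have h2' : (2:F) * A i i = 0 := by linear_combination h
      rcases mul_eq_zero.mp h2' with h' | h'
      · exact absurd h' h2
      · exact h'
    obtain _ | _ | m := n
    · exact ⟨1, by simp [Matrix.det_fin_zero]⟩
    · exact absurd (by rw [Matrix.det_fin_one, hdiag]) hd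
    · -- find j with A 0 j ≠ 0
      have hrow : ∃ j, A 0 j ≠ 0 := by
        by_contra h
        push_neg at h
        exact hd (Matrix.det_eq_zero_of_row_eq_zero 0 h)
      obtain ⟨j, hj⟩ := hrow
      have hj0 : j ≠ 0 := by rintro rfl; exact hj (hdiag 0)
      set σ : Equiv.Perm (Fin (m+2)) := Equiv.swap 1 j with hσ
      set A' := A.submatrix σ σ with hA'
      have hdetA' : A'.det = A.det := Matrix.det_submatrix_equiv_self σ A
      have hσ0 : σ 0 = 0 := Equiv.swap_apply_of_ne_of_ne (by simp) (Ne.symm hj0)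
      have hσ1 : σ 1 = j := Equiv.swap_apply_left 1 j
      have hskew' : ∀ i j, A' j i = -A' i j := fun i j => hskew (σ i) (σ j)
      have ha : A' 0 1 ≠ 0 := by
        simpa [hA', Matrix.submatrix_apply, hσ0, hσ1] using hj
      set a := A' 0 1 with haa
      -- reindex into blocks
      set e : Fin (m+2) ≃ Fin 2 ⊕ Fin m :=
        (finCongr (by omega : m + 2 = 2 + m)).trans finSumFinEquiv.symm with he
      set B := A'.submatrix e.symm e.symm with hB
      have hdetB : B.det = A'.det := Matrix.det_submatrix_equiv_self e.symm A'
      have hskewB : ∀ p q, B q p = -B p q := fun p q => hskew' (e.symm p) (e.symm q)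
      have hin0 : e.symm (Sum.inl 0) = 0 := by
        apply Fin.ext
        simp [he, finSumFinEquiv_apply_left]
      have hin1 : e.symm (Sum.inl 1) = 1 := by
        apply Fin.ext
        simp [he, finSumFinEquiv_apply_left]
      set B11 := B.toBlocks₁₁ with h11d
      set B12 := B.toBlocks₁₂ with h12d
      set B21 := B.toBlocks₂₁ with h21d
      set B22 := B.toBlocks₂₂ with h22d
      have e00 : B11 0 0 = 0 := by
        simp only [h11d, Matrix.toBlocks₁₁, Matrix.of_apply, hB, Matrix.submatrix_apply, hin0]
        exact hdiag _
      have e11 : B11 1 1 = 0 := by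
        simp only [h11d, Matrix.toBlocks₁₁, Matrix.of_apply, hB, Matrix.submatrix_apply, hin1]
        exact hdiag _
      have e01 : B11 0 1 = a := by
        simp only [h11d, Matrix.toBlocks₁₁, Matrix.of_apply, hB, Matrix.submatrix_apply, hin0, hin1]
        exact haa.symm
      have e10 : B11 1 0 = -a := by
        simp only [h11d, Matrix.toBlocks₁₁, Matrix.of_apply, hB, Matrix.submatrix_apply, hin0, hin1]
        exact hskew' 0 1
      have hdet11 : B11.det = a ^ 2 := by
        rw [Matrix.det_fin_two, e00, e11, e01, e10]; ring
      have hu : IsUnit B11.det := by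
        rw [hdet11]; exact (pow_ne_zero 2 ha).isUnit
      have : Invertible B11 := B11.invertibleOfIsUnitDet hu
      have h11 : B11ᵀ = -B11 := by
        ext i k
        simp only [Matrix.transpose_apply, Matrix.neg_apply]
        exact hskewB (Sum.inl i) (Sum.inl k)
      have h22 : B22ᵀ = -B22 := by
        ext i k
        simp only [Matrix.transpose_apply, Matrix.neg_apply]
        exact hskewB (Sum.inr i) (Sum.inr k)
      have h12 : B12ᵀ = -B21 := by
        ext i k
        simp only [Matrix.transpose_apply, Matrix.neg_apply]
        exact hskewB (Sum.inr i) (Sum.inl k)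
      have h21 : B21ᵀ = -B12 := by
        ext i k
        simp only [Matrix.transpose_apply, Matrix.neg_apply]
        exact hskewB (Sum.inl i) (Sum.inr k)
      have hinv : (B11⁻¹)ᵀ = -(B11⁻¹) := by
        rw [Matrix.transpose_nonsing_inv, h11]
        refine Matrix.inv_eq_right_inv ?_
        rw [neg_mul_neg]
        exact Matrix.mul_nonsing_inv B11 hu
      set S := B22 - B21 * B11⁻¹ * B12 with hS
      have hSskew : Sᵀ = -S := by
        rw [hS, Matrix.transpose_sub, Matrix.transpose_mul, Matrix.transpose_mul,
          h22, h12, h21, hinv]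
        simp only [Matrix.neg_mul, Matrix.mul_neg, neg_neg, sub_eq_add_neg, neg_add, mul_assoc]
        abel_nf
        congr 1
        exact (Matrix.mul_assoc B21 B11⁻¹ B12).symm
      obtain ⟨c, hc⟩ := ih m (by omega) S hSskew
      refine ⟨a * c, ?_⟩
      have hblocks : Matrix.fromBlocks B11 B12 B21 B22 = B := Matrix.fromBlocks_toBlocks B
      have hschur : B.det = B11.det * S.det := by
        rw [← hblocks, Matrix.det_fromBlocks₁₁, Matrix.invOf_eq_nonsing_inv]
      rw [← hdetA', ← hdetB, hschur, hdet11, hc]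
      ring

/-- If `g` is invertible skew-symmetric and `gM` is skew-symmetric, then the
characteristic polynomial of `M` is a perfect square; equivalently every
eigenvalue of `M` has even algebraic multiplicity. -/
theorem stmt_10 (n : ℕ) (g M : Matrix (Fin n) (Fin n) ℂ)
    (hg : gᵀ = -g) (hdet : IsUnit g.det) (hgM : (g * M)ᵀ = -(g * M)) :
    ∃ p : Polynomial ℂ, M.charpoly = p ^ 2 := by
  classical
  set R := Polynomial ℂ
  set φ : ℂ →+* R := Polynomial.C with hφ
  set A : Matrix (Fin n) (Fin n) R :=
    (Polynomial.X : R) • g.map φ - (g * M).map φ with hAdef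
  -- A is g.map φ * charmatrix M
  have hfact : g.map φ * M.charmatrix = A := by
    have hch : M.charmatrix = (Polynomial.X : R) • (1 : Matrix (Fin n) (Fin n) R) - M.map φ := by
      apply Matrix.ext
      intro i j
      by_cases h : i = j
      · subst h
        rw [Matrix.charmatrix_apply_eq, Matrix.sub_apply, Matrix.smul_apply, Matrix.one_apply_eq,
          smul_eq_mul, mul_one, Matrix.map_apply, hφ]
      · rw [Matrix.charmatrix_apply_ne _ _ _ h, Matrix.sub_apply, Matrix.smul_apply,
          Matrix.one_apply_ne h, smul_eq_mul, mul_zero, zero_sub, Matrix.map_apply, hφ]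
    rw [hch, Matrix.mul_sub, mul_smul_comm, Matrix.mul_one, ← Matrix.map_mul, hAdef]
  have hAskew : Aᵀ = -A := by
    have h1 : (g.map φ)ᵀ = -(g.map φ) := by
      rw [← Matrix.transpose_map, hg]
      ext i j; simp only [Matrix.map_apply, Matrix.neg_apply, map_neg]
    have h2 : ((g * M).map φ)ᵀ = -((g * M).map φ) := by
      rw [← Matrix.transpose_map, hgM]
      ext i j; simp only [Matrix.map_apply, Matrix.neg_apply, map_neg]
    rw [hAdef, Matrix.transpose_sub, Matrix.transpose_smul, h1, h2, smul_neg,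
      sub_neg_eq_add, neg_sub]
    abel
  -- pass to the fraction field
  set K := RatFunc ℂ
  set ψ : R →+* K := algebraMap R K with hψ
  have hψinj : Function.Injective ψ := IsFractionRing.injective R K
  have hBskew : ((A.map ψ)ᵀ : Matrix (Fin n) (Fin n) K) = -(A.map ψ) := by
    rw [← Matrix.transpose_map, hAskew]
    ext i j; simp only [Matrix.map_apply, Matrix.neg_apply, map_neg]
    exact map_neg ψ _
  obtain ⟨q, hq⟩ := skew_det_sq (by
    intro h
    apply (two_ne_zero : (2:R) ≠ 0)
    apply hψinj
    rw [map_ofNat, map_zero]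
    exact_mod_cast h) n (A.map ψ) hBskew
  have hqint : IsIntegral R q := by
    refine ⟨Polynomial.X ^ 2 - Polynomial.C A.det, Polynomial.monic_X_pow_sub_C _ (by norm_num), ?_⟩
    have : ψ A.det = q ^ 2 := by rw [RingHom.map_det, RingHom.mapMatrix_apply, hq]
    simp [Polynomial.eval₂_sub, this]
    exact sub_eq_zero.mpr this.symm
  obtain ⟨d, hd⟩ := IsIntegrallyClosed.isIntegral_iff.mp hqint
  have hAd : A.det = d ^ 2 := by
    apply hψinj
    rw [map_pow, hd, ← hq, RingHom.map_det, RingHom.mapMatrix_apply]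
  -- take a square root of det g
  obtain ⟨c, hc⟩ := IsAlgClosed.exists_pow_nat_eq g.det (n := 2) (by norm_num)
  have hc0 : c ≠ 0 := by
    intro h
    rw [h] at hc
    simp at hc
    exact hdet.ne_zero hc.symm
  refine ⟨Polynomial.C c⁻¹ * d, ?_⟩
  have hgdet : (g.map φ).det = Polynomial.C g.det := by
    rw [← RingHom.mapMatrix_apply φ, ← RingHom.map_det]
  have key : Polynomial.C g.det * M.charpoly = d ^ 2 := by
    rw [← hAd, ← hfact, Matrix.det_mul, hgdet, Matrix.charpoly]
  have hC0 : (Polynomial.C g.det : R) ≠ 0 := by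
    simpa using hdet.ne_zero
  apply mul_left_cancel₀ hC0
  rw [key, ← hc]
  have hone : (Polynomial.C (c ^ 2) : R) * Polynomial.C c⁻¹ ^ 2 = 1 := by
    rw [← Polynomial.C_pow, ← Polynomial.C_mul, ← mul_pow, mul_inv_cancel₀ hc0]
    simp
  calc d ^ 2 = Polynomial.C (c ^ 2) * Polynomial.C c⁻¹ ^ 2 * d ^ 2 := by rw [hone, one_mul]
    _ = Polynomial.C (c ^ 2) * (Polynomial.C c⁻¹ * d) ^ 2 := by ring
end

section
/- Let $V^i_j$ be a matrix field satisfying $g_{qj}V^j_p + g_{pj}V^j_q = 0$ and whose derivatives satisfy $V^a_{,pl} = -g^{aq}(T_{pqk}V^k_l + T_{qkl}V^k_p)$, with $g$ invertible skew-symmetric affine as above. Then the Nijenhuis tensor $N^i_{jk} = V^p_j V^i_{k,p} - V^p_k V^i_{j,p} - V^i_p(V^p_{k,j} - V^p_{j,k})$ equals $g^{ia}(T_{jal}V^l_pV^p_k - T_{kal}V^l_pV^p_j - 2T_{alp}V^l_kV^p_j)$. -/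
private lemma aux_rearr {n : ℕ} (A : Fin n → ℂ) (B : Fin n → Fin n → Fin n → ℂ) :
    ∑ x, A x * -∑ q, ∑ m, B q m x = ∑ q, ∑ m, ∑ x, -(B q m x * A x) := by
  have h1 : ∀ x, A x * -∑ q, ∑ m, B q m x = ∑ q, ∑ m, -(B q m x * A x) := by
    intro x
    simp only [mul_neg, Finset.mul_sum, ← Finset.sum_neg_distrib]
    exact Finset.sum_congr rfl fun q _ => Finset.sum_congr rfl fun m _ => by ring
  rw [Finset.sum_congr rfl fun x _ => h1 x, Finset.sum_comm]
  exact Finset.sum_congr rfl fun q _ => Finset.sum_comm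

/-- If the matrix field `V^i_j` satisfies `g_{qj}V^j_p + g_{pj}V^j_q = 0` and
`V^a_{p,l} = -g^{aq}(T_{pqk}V^k_l + T_{qkl}V^k_p)`, then the Nijenhuis tensor of
`V` equals `g^{ia}(T_{jal}V^l_pV^p_k - T_{kal}V^l_pV^p_j - 2 T_{alp}V^l_kV^p_j)`. -/
theorem stmt_12 (n : ℕ) (T : Fin n → Fin n → Fin n → ℂ)
    (hT1 : ∀ i j k, T j i k = - T i j k) (hT2 : ∀ i j k, T i k j = - T i j k)
    (g0 : Fin n → Fin n → ℂ) (hg0 : ∀ i j, g0 j i = - g0 i j)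
    (g : (Fin n → ℂ) → Matrix (Fin n) (Fin n) ℂ)
    (hg : ∀ u i j, g u i j = (∑ k, T i j k * u k) + g0 i j)
    (Vm : (Fin n → ℂ) → Fin n → Fin n → ℂ)
    (u : Fin n → ℂ) (hu : IsUnit (g u).det)
    (hskew : ∀ q p : Fin n,
      (∑ j, g u q j * Vm u j p) + (∑ j, g u p j * Vm u j q) = 0)
    (hD : ∀ a p l : Fin n,
      fderiv ℂ (fun v => Vm v a p) u (Pi.single l 1) =
        - ∑ q, ∑ k, (g u)⁻¹ a q * (T p q k * Vm u k l + T q k l * Vm u k p)) :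
    ∀ i j k : Fin n,
      ((∑ p, Vm u p j * fderiv ℂ (fun v => Vm v i k) u (Pi.single p 1)) -
       (∑ p, Vm u p k * fderiv ℂ (fun v => Vm v i j) u (Pi.single p 1)) -
       (∑ p, Vm u i p *
         (fderiv ℂ (fun v => Vm v p k) u (Pi.single j 1) -
          fderiv ℂ (fun v => Vm v p j) u (Pi.single k 1)))) =
      ∑ a, (g u)⁻¹ i a *
        ((∑ l, ∑ p, T j a l * Vm u l p * Vm u p k) -
         (∑ l, ∑ p, T k a l * Vm u l p * Vm u p j) -
         2 * (∑ l, ∑ p, T a l p * Vm u l k * Vm u p j)) := by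
  intro i j k
  have hcyc : ∀ a b c, T c a b = T a b c := fun a b c => by
    linear_combination hT1 a c b - hT2 a b c
  simp only [hD]
  set Vf := Vm u with hVf
  set G := (g u)⁻¹ with hG
  have h3 : ∀ x : Fin n,
      (-∑ q : Fin n, ∑ m : Fin n, G x q * (T k q m * Vf m j + T q m j * Vf m k) -
        -∑ q : Fin n, ∑ m : Fin n, G x q * (T j q m * Vf m k + T q m k * Vf m j)) = 0 := by
    intro x
    rw [sub_eq_zero, neg_inj]
    refine Finset.sum_congr rfl fun q _ => Finset.sum_congr rfl fun m _ => ?_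
    linear_combination (G x q * Vf m j) * hcyc q m k - (G x q * Vf m k) * hcyc q m j
  simp only [h3, mul_zero, Finset.sum_const_zero, sub_zero]
  have hswap : ∀ q : Fin n, ∑ l, ∑ p, T q l p * Vf l j * Vf p k =
      -∑ l, ∑ p, T q l p * Vf l k * Vf p j := by
    intro q
    rw [Finset.sum_comm, ← Finset.sum_neg_distrib]
    refine Finset.sum_congr rfl fun x _ => ?_
    rw [← Finset.sum_neg_distrib]
    refine Finset.sum_congr rfl fun y _ => ?_
    linear_combination (Vf x k * Vf y j) * hT2 q y x
  rw [aux_rearr (fun x => Vf x j) (fun q m x => G i q * (T k q m * Vf m x + T q m x * Vf m k)),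
      aux_rearr (fun x => Vf x k) (fun q m x => G i q * (T j q m * Vf m x + T q m x * Vf m j))]
  have key : ∀ q : Fin n,
      G i q * ((∑ l, ∑ p, T j q l * Vf l p * Vf p k) -
        (∑ l, ∑ p, T k q l * Vf l p * Vf p j) -
        2 * (∑ l, ∑ p, T q l p * Vf l k * Vf p j)) =
      G i q * (∑ l, ∑ p, T j q l * Vf l p * Vf p k) -
      G i q * (∑ l, ∑ p, T k q l * Vf l p * Vf p j) -
      G i q * (∑ l, ∑ p, T q l p * Vf l k * Vf p j) +
      G i q * (∑ l, ∑ p, T q l p * Vf l j * Vf p k) := fun q => by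
    linear_combination (-(G i q)) * hswap q
  trans (∑ q : Fin n, ∑ m : Fin n, ∑ x : Fin n,
      (G i q * (T j q m * Vf m x + T q m x * Vf m j) * Vf x k -
       G i q * (T k q m * Vf m x + T q m x * Vf m k) * Vf x j))
  · rw [← Finset.sum_sub_distrib]
    refine Finset.sum_congr rfl fun q _ => ?_
    rw [← Finset.sum_sub_distrib]
    refine Finset.sum_congr rfl fun m _ => ?_
    rw [← Finset.sum_sub_distrib]
    exact Finset.sum_congr rfl fun x _ => by ring
  · symm
    rw [Finset.sum_congr rfl fun q _ => key q]
    refine Finset.sum_congr rfl fun q _ => ?_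
    simp only [Finset.mul_sum]
    rw [← Finset.sum_sub_distrib, ← Finset.sum_sub_distrib, ← Finset.sum_add_distrib]
    refine Finset.sum_congr rfl fun m _ => ?_
    rw [← Finset.sum_sub_distrib, ← Finset.sum_sub_distrib, ← Finset.sum_add_distrib]
    exact Finset.sum_congr rfl fun x _ => by ring
end
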